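/- Let $q=2^r$ and let $n\geq 1$ be an odd integer, with $(n,q)\neq(1,4)$. Then the $\mathbb{F}_2$-linear map $\mathbb{F}_q\to\mathbb{F}_2^{N(n,q)}$, $a\mapsto c(a)=(tr(a\,\mathrm{Tr}\,g_1),\dots,tr(a\,\mathrm{Tr}\,g_{N(n,q)}))$, is injective, and hence gives an $\mathbb{F}_2$-linear isomorphism from $\mathbb{F}_q$ onto the dual code $C(DC(n,q))^{\perp}=\{c(a):a\in\mathbb{F}_q\}$. -/

import Mathlib

open scoped BigOperators Classical
open Matrix

noncomputable section

/-- The finite field `F_q` with `q = 2^r` elements. -/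
abbrev Fq (r : ℕ) : Type := GaloisField 2 r

noncomputable instance (r : ℕ) : Fintype (Fq r) := Fintype.ofFinite _

/-- The trace map `tr : F_q → F_2`. -/
noncomputable def tr2 (r : ℕ) (x : Fq r) : ZMod 2 := Algebra.trace (ZMod 2) (Fq r) x

/-- Index type for `(2n+1) × (2n+1)` matrices, split into blocks `n + (n + 1)`. -/
abbrev Idx (n : ℕ) := Fin n ⊕ (Fin n ⊕ Unit)

/-- The quadratic form `θ(x) = ∑_{i=1}^n x_i x_{n+i} + x_{2n+1}²`. -/
def theta (r n : ℕ) (x : Idx n → Fq r) : Fq r :=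
  (∑ i : Fin n, x (Sum.inl i) * x (Sum.inr (Sum.inl i))) + x (Sum.inr (Sum.inr ())) ^ 2

/-- Assemble a `(2n+1) × (2n+1)` matrix `[[A, B, e],[C, D, f],[g, h, c]]` from blocks. -/
def blk {α : Type} {n : ℕ} (A B C D : Matrix (Fin n) (Fin n) α)
    (g h e f : Fin n → α) (c : α) : Matrix (Idx n) (Idx n) α :=
  Matrix.of fun i j =>
    match i, j with
    | Sum.inl i, Sum.inl j => A i j
    | Sum.inl i, Sum.inr (Sum.inl j) => B i j
    | Sum.inl i, Sum.inr (Sum.inr _) => e i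
    | Sum.inr (Sum.inl i), Sum.inl j => C i j
    | Sum.inr (Sum.inl i), Sum.inr (Sum.inl j) => D i j
    | Sum.inr (Sum.inl i), Sum.inr (Sum.inr _) => f i
    | Sum.inr (Sum.inr _), Sum.inl j => g j
    | Sum.inr (Sum.inr _), Sum.inr (Sum.inl j) => h j
    | Sum.inr (Sum.inr _), Sum.inr (Sum.inr _) => c

/-- A square matrix is alternating: symmetric with zero diagonal (characteristic 2). -/
def IsAlt {n : ℕ} {α : Type} [Zero α] (M : Matrix (Fin n) (Fin n) α) : Prop :=
  Mᵀ = M ∧ ∀ i, M i i = 0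

/-- The orthogonal group `O(2n+1, q)`: isometries of the quadratic form `θ`. -/
def OGrp (r n : ℕ) : Set (Matrix (Idx n) (Idx n) (Fq r)) :=
  {w | IsUnit w ∧ ∀ x, theta r n (w.mulVec x) = theta r n x}

/-- The maximal parabolic subgroup `P(2n+1, q)`: all products
`[[A,0,0],[0,ᵗA⁻¹,0],[0,0,1]] * [[1,B,0],[0,1,0],[0,h,1]]` with `A ∈ GL(n,q)` and
`B + ᵗh h` alternating. -/
def Pgrp (r n : ℕ) : Set (Matrix (Idx n) (Idx n) (Fq r)) :=
  {w | ∃ A B h, IsUnit A ∧ IsAlt (B + Matrix.of (fun i j => h i * h j)) ∧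
    w = blk A 0 0 ((A⁻¹)ᵀ) 0 0 0 0 1 * blk 1 B 0 1 0 h 0 0 1}

/-- The matrix `σ_k ∈ O(2n+1, q)` interchanging the first `k` coordinates with
coordinates `n+1, …, n+k`. -/
def sigmaMat (r n k : ℕ) : Matrix (Idx n) (Idx n) (Fq r) :=
  blk (Matrix.of fun i j => if i = j ∧ k ≤ (i : ℕ) then 1 else 0)
      (Matrix.of fun i j => if i = j ∧ (i : ℕ) < k then 1 else 0)
      (Matrix.of fun i j => if i = j ∧ (i : ℕ) < k then 1 else 0)
      (Matrix.of fun i j => if i = j ∧ k ≤ (i : ℕ) then 1 else 0)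
      0 0 0 0 1

/-- The double coset `P σ_k P`. -/
def DCoset (r n k : ℕ) : Set (Matrix (Idx n) (Idx n) (Fq r)) :=
  {w | ∃ p ∈ Pgrp r n, ∃ p' ∈ Pgrp r n, w = p * sigmaMat r n k * p'}

/-- The double coset `P σ_k P` as a finite set. -/
noncomputable def PsPfin (r n k : ℕ) : Finset (Matrix (Idx n) (Idx n) (Fq r)) :=
  (Set.toFinite (DCoset r n k)).toFinset

/-- `DC(n, q) = P σ_{n-1} P`. -/
noncomputable def DCfin (r n : ℕ) : Finset (Matrix (Idx n) (Idx n) (Fq r)) :=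
  PsPfin r n (n - 1)

/-- The binary linear code `C(DC(n,q))`: all `u ∈ F_2^N` with `u · v(n,q) = 0`, the dot
product computed in `F_q` (viewing the coordinates of `u` in `F_2 ⊆ F_q`), where
`v(n,q) = (Tr g_1, …, Tr g_N)` for a fixed ordering `g` of `DC(n,q)`. -/
def codeSet (r n : ℕ) {N : ℕ} (g : Fin N → Matrix (Idx n) (Idx n) (Fq r)) :
    Set (Fin N → ZMod 2) :=
  {u | ∑ i, algebraMap (ZMod 2) (Fq r) (u i) * Matrix.trace (g i) = 0}

/-- The codeword `c(a) = (tr(a·Tr g_1), …, tr(a·Tr g_N))`. -/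
noncomputable def cword (r n : ℕ) {N : ℕ} (g : Fin N → Matrix (Idx n) (Idx n) (Fq r))
    (a : Fq r) : Fin N → ZMod 2 :=
  fun i => tr2 r (a * Matrix.trace (g i))
section BlkLemmas

variable {α : Type} [CommRing α] {n : ℕ}

lemma blk_one : (blk (1 : Matrix (Fin n) (Fin n) α) 0 0 1 0 0 0 0 1) = 1 := by
  ext i j
  rcases i with i | i | _ <;> rcases j with j | j | _ <;>
    simp [blk, Matrix.one_apply]

lemma trace_blk (A B C D : Matrix (Fin n) (Fin n) α) (g h e f : Fin n → α) (c : α) :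
    Matrix.trace (blk A B C D g h e f c) = Matrix.trace A + Matrix.trace D + c := by
  simp [Matrix.trace, Matrix.diag, blk, Fintype.sum_sum_type]
  ring

lemma trace_blk_mul (A B C D : Matrix (Fin n) (Fin n) α) (g h e f : Fin n → α) (c : α)
    (A' B' C' D' : Matrix (Fin n) (Fin n) α) (g' h' e' f' : Fin n → α) (c' : α) :
    Matrix.trace (blk A B C D g h e f c * blk A' B' C' D' g' h' e' f' c') =
      Matrix.trace (A * A') + Matrix.trace (B * C') + (∑ i, e i * g' i)
      + Matrix.trace (C * B') + Matrix.trace (D * D') + (∑ i, f i * h' i)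
      + (∑ i, g i * e' i) + (∑ i, h i * f' i) + c * c' := by
  simp [Matrix.trace, Matrix.diag, Matrix.mul_apply, blk, Fintype.sum_sum_type,
    Finset.sum_add_distrib]
  ring

end BlkLemmas

lemma sigma_eq (r n k : ℕ) :
    sigmaMat r n k = blk (Matrix.diagonal fun i : Fin n => if k ≤ (i : ℕ) then 1 else 0)
      (Matrix.diagonal fun i : Fin n => if (i : ℕ) < k then 1 else 0)
      (Matrix.diagonal fun i : Fin n => if (i : ℕ) < k then 1 else 0)
      (Matrix.diagonal fun i : Fin n => if k ≤ (i : ℕ) then 1 else 0) 0 0 0 0 1 := by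
  ext i j
  rcases i with i | i | _ <;> rcases j with j | j | _ <;>
      simp only [sigmaMat, blk, Matrix.of_apply, Matrix.diagonal_apply] <;>
    first
      | rfl
      | (by_cases hij : i = j <;> simp [hij])

lemma sigma_one (r : ℕ) : sigmaMat r 1 0 = 1 := by
  rw [sigma_eq]
  have h1 : (Matrix.diagonal fun i : Fin 1 => if 0 ≤ (i : ℕ) then (1:Fq r) else 0) = 1 := by
    simp
  have h2 : (Matrix.diagonal fun i : Fin 1 => if (i : ℕ) < 0 then (1:Fq r) else 0) = 0 := by
    simp
  rw [h1, h2, blk_one]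
lemma one_mem_Pgrp (r n : ℕ) : (1 : Matrix (Idx n) (Idx n) (Fq r)) ∈ Pgrp r n := by
  refine ⟨1, 0, 0, isUnit_one, ⟨?_, ?_⟩, ?_⟩
  · ext i j
    simp [Matrix.transpose_apply, Matrix.add_apply]
  · intro i
    simp
  · rw [inv_one, Matrix.transpose_one, blk_one, mul_one]

lemma pB_mem_Pgrp (r n : ℕ) (h : Fin n → Fq r) :
    blk 1 (Matrix.diagonal fun i => h i * h i) 0 1 0 h 0 0 1 ∈ Pgrp r n := by
  refine ⟨1, Matrix.diagonal fun i => h i * h i, h, isUnit_one, ⟨?_, ?_⟩, ?_⟩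
  · ext i j
    by_cases hij : i = j
    · simp [Matrix.transpose_apply, Matrix.add_apply, hij, mul_comm]
    · have hji : ¬ j = i := fun hc => hij hc.symm
      simp [Matrix.transpose_apply, Matrix.add_apply, Matrix.diagonal_apply, hij, hji,
        mul_comm]
  · intro i
    simp [Matrix.diagonal_apply, CharTwo.add_self_eq_zero]
  · rw [inv_one, Matrix.transpose_one, blk_one, one_mul]

lemma dc_elt (r n : ℕ) (h : Fin n → Fq r) :
    ∃ w ∈ DCfin r n, Matrix.trace w
      = (∑ i : Fin n, if (i : ℕ) < n - 1 then h i * h i else 0) + 1 := by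
  refine ⟨blk 1 (Matrix.diagonal fun i => h i * h i) 0 1 0 h 0 0 1 * sigmaMat r n (n-1),
    ?_, ?_⟩
  · rw [DCfin, PsPfin, Set.Finite.mem_toFinset]
    exact ⟨_, pB_mem_Pgrp r n h, 1, one_mem_Pgrp r n, by rw [mul_one]⟩
  · rw [sigma_eq, trace_blk_mul, one_mul, one_mul, Matrix.zero_mul,
      Matrix.diagonal_mul_diagonal]
    simp only [Matrix.trace_diagonal, Matrix.trace_zero, mul_ite, mul_one, mul_zero,
      Pi.zero_apply, zero_mul, Finset.sum_const_zero, add_zero, mul_one]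
    ring_nf
    simp [CharTwo.two_eq_zero, sq]

lemma dc_elt_of (r n : ℕ) (hr : 1 ≤ r) (hn2 : 2 ≤ n) (x : Fq r) :
    ∃ w ∈ DCfin r n, Matrix.trace w = x := by
  obtain ⟨w, hw, htr⟩ := dc_elt r n (fun i : Fin n => if (i : ℕ) = 0 then (x+1)^(2^(r-1)) else 0)
  refine ⟨w, hw, ?_⟩
  rw [htr]
  have h0 : (∑ i : Fin n, if (i : ℕ) < n - 1 then
      (if (i : ℕ) = 0 then (x+1)^(2^(r-1)) else 0) * (if (i : ℕ) = 0 then (x+1)^(2^(r-1)) else 0)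
        else 0) = (x+1)^(2^(r-1)) * (x+1)^(2^(r-1)) := by
    rw [Finset.sum_eq_single_of_mem (⟨0, by omega⟩ : Fin n) (Finset.mem_univ _)]
    · simp [show (0:ℕ) < n - 1 by omega]
    · intro b _ hb
      have hb0 : (b : ℕ) ≠ 0 := by
        intro hc
        exact hb (Fin.ext hc)
      simp [hb0]
  rw [h0, ← pow_add]
  have hexp : 2^(r-1) + 2^(r-1) = 2^r := by
    calc 2^(r-1) + 2^(r-1) = 2^(r-1) * 2 := by ring
    _ = 2^(r-1+1) := (pow_succ 2 (r-1)).symm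
    _ = 2^r := by rw [Nat.sub_add_cancel hr]
  rw [hexp]
  have hcard : Fintype.card (Fq r) = 2 ^ r := by
    have := GaloisField.card 2 r (by omega)
    rwa [Nat.card_eq_fintype_card] at this
  rw [← hcard, FiniteField.pow_card]
  rw [add_assoc]
  simp [CharTwo.add_self_eq_zero]

lemma dc_elt_one (r : ℕ) (t : Fq r) (ht : t ≠ 0) :
    ∃ w ∈ DCfin r 1, Matrix.trace w = t + t⁻¹ + 1 := by
  have hAinv : (Matrix.diagonal (fun _ : Fin 1 => t))⁻¹
      = Matrix.diagonal (fun _ : Fin 1 => t⁻¹) := by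
    apply Matrix.inv_eq_right_inv
    rw [Matrix.diagonal_mul_diagonal]
    simp [mul_inv_cancel₀ ht]
  refine ⟨blk (Matrix.diagonal fun _ : Fin 1 => t) 0 0 (Matrix.diagonal fun _ : Fin 1 => t⁻¹)
    0 0 0 0 1, ?_, ?_⟩
  · rw [DCfin, PsPfin, Set.Finite.mem_toFinset]
    refine ⟨_, ⟨Matrix.diagonal fun _ : Fin 1 => t, 0, 0, ?_, ?_, rfl⟩, 1,
      one_mem_Pgrp r 1, ?_⟩
    · rw [Matrix.isUnit_iff_isUnit_det, Matrix.det_diagonal]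
      simpa using ht
    · refine ⟨?_, ?_⟩
      · ext i j; simp [Matrix.transpose_apply, Matrix.add_apply]
      · intro i; simp
    · rw [show (1:ℕ) - 1 = 0 from rfl, sigma_one, mul_one, mul_one, blk_one, mul_one,
        hAinv, Matrix.diagonal_transpose]
  · rw [trace_blk]
    simp [Matrix.trace_diagonal]
/-- The Artin–Schreier additive homomorphism `x ↦ x² + x`. -/
noncomputable def asHom (r : ℕ) : Fq r →+ Fq r where
  toFun := fun x => x * x + x
  map_zero' := by simp
  map_add' := by
    intro x y
    have h2 : x * y + x * y = 0 := CharTwo.add_self_eq_zero _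
    linear_combination h2

lemma asHom_ker (r : ℕ) : ((asHom r).ker : Set (Fq r)) = {0, 1} := by
  ext x
  simp only [SetLike.mem_coe, AddMonoidHom.mem_ker, asHom, AddMonoidHom.coe_mk,
    ZeroHom.coe_mk, Set.mem_insert_iff, Set.mem_singleton_iff]
  constructor
  · intro hx
    have hfact : x * (x + 1) = 0 := by linear_combination hx
    rcases mul_eq_zero.mp hfact with h | h
    · exact Or.inl h
    · right
      have h11 : (1 : Fq r) + 1 = 0 := CharTwo.add_self_eq_zero 1
      linear_combination h - h11
  · rintro (rfl | rfl)
    · simp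
    · simpa using CharTwo.add_self_eq_zero (1 : Fq r)

lemma card_range_asHom (r : ℕ) (hr : r ≠ 0) :
    Nat.card (asHom r).range = 2 ^ (r - 1) := by
  have hker : Nat.card (asHom r).ker = 2 := by
    have : Nat.card (((asHom r).ker : Set (Fq r))) = 2 := by
      rw [asHom_ker, Nat.card_coe_set_eq, Set.ncard_pair (zero_ne_one)]
    exact this
  have hquot : Nat.card (Fq r) = Nat.card (Fq r ⧸ (asHom r).ker) * Nat.card (asHom r).ker :=
    AddSubgroup.card_eq_card_quotient_mul_card_addSubgroup _
  have hrange : Nat.card (Fq r ⧸ (asHom r).ker) = Nat.card (asHom r).range :=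
    Nat.card_congr (QuotientAddGroup.quotientKerEquivRange (asHom r)).toEquiv
  have hcardK : Nat.card (Fq r) = 2 ^ r := GaloisField.card 2 r hr
  rw [hker, hrange, hcardK] at hquot
  have h2r : 2 ^ r = 2 ^ (r - 1) * 2 := by
    calc 2 ^ r = 2 ^ (r - 1 + 1) := by rw [Nat.sub_add_cancel (by omega)]
    _ = 2 ^ (r - 1) * 2 := pow_succ 2 (r - 1)
  omega

lemma zmod2_add_eq_zero : ∀ x y : ZMod 2, x + y = 0 → x = y := by decide

lemma kloos (r : ℕ) (hr3 : 3 ≤ r) (a : Fq r) (ha : a ≠ 0) :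
    ∃ t : Fq r, t ≠ 0 ∧ tr2 r (a * (t + t⁻¹ + 1)) ≠ 0 := by
  by_contra hcon
  push_neg at hcon
  set H : Fq r → ZMod 2 := fun x => tr2 r (a * x) with hH
  have Hadd : ∀ x y, H (x + y) = H x + H y := by
    intro x y
    simp [hH, tr2, mul_add, map_add]
  have H0 : H 0 = 0 := by simp [hH, tr2]
  have H1 : H 1 = 0 := by
    have e : (1 : Fq r) + 1⁻¹ + 1 = 1 := by
      rw [inv_one, CharTwo.add_self_eq_zero, zero_add]
    have h := hcon 1 one_ne_zero
    rwa [e] at h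
  have Hinv : ∀ t, t ≠ 0 → H t⁻¹ = H t := by
    intro t ht
    have h := hcon t ht
    have h2 : H t + H t⁻¹ + H 1 = 0 := by rw [← Hadd, ← Hadd]; exact h
    rw [H1, add_zero] at h2
    exact (zmod2_add_eq_zero _ _ h2).symm
  have Hmul : ∀ v, v ≠ 0 → ∀ s, s ≠ 0 → s ≠ 1 → H (v * (s * s + s)) = H v := by
    intro v hv s hs0 hs1
    have h11 : (1 : Fq r) + 1 = 0 := CharTwo.add_self_eq_zero 1
    have hs1' : s + 1 ≠ 0 := by
      intro hc
      apply hs1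
      linear_combination hc - h11
    have hsv : s * v ≠ 0 := mul_ne_zero hs0 hv
    have hsv1 : (s + 1) * v ≠ 0 := mul_ne_zero hs1' hv
    have hss : s * s + s = s * (s + 1) := by ring
    have hssne : s * s + s ≠ 0 := by rw [hss]; exact mul_ne_zero hs0 hs1'
    have hvs : v * (s * s + s) ≠ 0 := mul_ne_zero hv hssne
    have hkey : (s⁻¹ + (s + 1)⁻¹) * (s * (s + 1)) = 1 := by
      have e1 : s⁻¹ * (s * (s + 1)) = s + 1 := by
        rw [← mul_assoc, inv_mul_cancel₀ hs0, one_mul]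
      have e2 : (s + 1)⁻¹ * (s * (s + 1)) = s := by
        rw [mul_comm s (s + 1), ← mul_assoc, inv_mul_cancel₀ hs1', one_mul]
      rw [add_mul, e1, e2]
      linear_combination CharTwo.add_self_eq_zero s
    have hinv3 : s⁻¹ + (s + 1)⁻¹ = (s * (s + 1))⁻¹ := eq_inv_of_mul_eq_one_left hkey
    have e3 : (s * v)⁻¹ + ((s + 1) * v)⁻¹ = (v * (s * s + s))⁻¹ := by
      rw [hss, mul_comm v (s * (s + 1)), mul_inv (s * (s + 1)) v, ← hinv3, mul_inv,
        mul_inv, ← add_mul]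
    have chain : H v = H (v * (s * s + s)) := by
      calc H v = H (s * v + (s + 1) * v) := by
            congr 1
            linear_combination -CharTwo.add_self_eq_zero (s * v)
        _ = H (s * v) + H ((s + 1) * v) := Hadd _ _
        _ = H (s * v)⁻¹ + H ((s + 1) * v)⁻¹ := by rw [Hinv _ hsv, Hinv _ hsv1]
        _ = H ((s * v)⁻¹ + ((s + 1) * v)⁻¹) := (Hadd _ _).symm
        _ = H (v * (s * s + s))⁻¹ := by rw [e3]
        _ = H (v * (s * s + s)) := Hinv _ hvs
    exact chain.symm
  classical
  set Q : Set (Fq r)ˣ := {u | ∃ s : Fq r, s ≠ 0 ∧ s ≠ 1 ∧ (u : Fq r) = s * s + s} with hQdef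
  set G := Subgroup.closure Q with hGdef
  have hG : ∀ g ∈ G, ∀ v : Fq r, v ≠ 0 → H (v * g) = H v := by
    intro g hg
    refine Subgroup.closure_induction (fun x hx v hv => ?_) (fun v hv => ?_)
      (fun x y hx hy ihx ihy v hv => ?_) (fun x hx ihx v hv => ?_) hg
    · obtain ⟨s, hs0, hs1, hxe⟩ := hx
      rw [hxe]
      exact Hmul v hv s hs0 hs1
    · rw [Units.val_one, mul_one]
    · rw [Units.val_mul, ← mul_assoc, ihy (v * ↑x) (mul_ne_zero hv (Units.ne_zero x)),
        ihx v hv]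
    · have h2 := ihx (v * ↑x⁻¹) (mul_ne_zero hv (Units.ne_zero _))
      rw [mul_assoc, Units.inv_mul, mul_one] at h2
      exact h2.symm
  have hcardK : Nat.card (Fq r) = 2 ^ r := GaloisField.card 2 r (by omega)
  have hcardU : Nat.card (Fq r)ˣ = 2 ^ r - 1 := by rw [Nat.card_units, hcardK]
  have hmemne : ∀ x : ↥(Set.range (asHom r) \ {(0 : Fq r)}), (x : Fq r) ≠ 0 :=
    fun x => by have := x.2.2; simpa using this
  have hinj : ∃ f : ↥(Set.range (asHom r) \ {(0 : Fq r)}) → ↥G, Function.Injective f := by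
    refine ⟨fun x => ⟨Units.mk0 (x : Fq r) (hmemne x), ?_⟩, ?_⟩
    · apply Subgroup.subset_closure
      obtain ⟨s, hs⟩ := x.2.1
      have hs0 : s ≠ 0 := by
        rintro rfl
        exact hmemne x (by rw [← hs]; exact map_zero _)
      have hs1 : s ≠ 1 := by
        rintro rfl
        refine hmemne x ?_
        rw [← hs]
        show (1 : Fq r) * 1 + 1 = 0
        rw [one_mul]
        exact CharTwo.add_self_eq_zero 1
      exact ⟨s, hs0, hs1, by rw [Units.val_mk0, ← hs]; rfl⟩
    · intro x y hxy
      apply Subtype.ext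
      have h2 : Units.mk0 (x : Fq r) (hmemne x) = Units.mk0 (y : Fq r) (hmemne y) :=
        congrArg Subtype.val hxy
      exact congrArg Units.val h2
  have hle : 2 ^ (r - 1) - 1 ≤ Nat.card G := by
    obtain ⟨f, hf⟩ := hinj
    have h1 : Nat.card ↥(Set.range (asHom r) \ {(0 : Fq r)}) ≤ Nat.card ↥G :=
      Nat.card_le_card_of_injective f hf
    have h2 : Nat.card ↥(Set.range (asHom r) \ {(0 : Fq r)}) = 2 ^ (r - 1) - 1 := by
      rw [Nat.card_coe_set_eq,
        Set.ncard_diff_singleton_of_mem (Set.mem_range.mpr ⟨0, map_zero _⟩)]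
      have h3 : Set.range (asHom r) = ((asHom r).range : Set (Fq r)) := by
        ext z; simp [AddMonoidHom.mem_range]
      rw [h3, ← Nat.card_coe_set_eq]
      rw [show Nat.card ↥((asHom r).range : Set (Fq r)) = Nat.card (asHom r).range from rfl]
      rw [card_range_asHom r (by omega)]
    omega
  have hGtop : G = ⊤ := by
    by_contra hne
    have hdvd : Nat.card G ∣ Nat.card (Fq r)ˣ := Subgroup.card_subgroup_dvd_card G
    have hneq : Nat.card G ≠ Nat.card (Fq r)ˣ := by
      intro h
      exact hne (Subgroup.eq_top_of_card_eq G h)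
    obtain ⟨k, hk⟩ := hdvd
    have hx4 : 4 ≤ 2 ^ (r - 1) := by
      calc (4 : ℕ) = 2 ^ 2 := rfl
      _ ≤ 2 ^ (r - 1) := Nat.pow_le_pow_right (by norm_num) (by omega)
    have hq2 : 2 ^ r = 2 * 2 ^ (r - 1) := by
      calc 2 ^ r = 2 ^ (r - 1 + 1) := by rw [Nat.sub_add_cancel (by omega)]
      _ = 2 * 2 ^ (r - 1) := by rw [pow_succ]; ring
    set x := 2 ^ (r - 1) with hxdef
    rw [hcardU, hq2] at hk
    have hk0 : k ≠ 0 := by rintro rfl; omega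
    have hk1 : k ≠ 1 := by
      rintro rfl
      rw [mul_one] at hk
      rw [hcardU, hq2] at hneq
      exact hneq hk.symm
    have hk2 : k ≠ 2 := by rintro rfl; omega
    have h3k : Nat.card G * 3 ≤ Nat.card G * k := Nat.mul_le_mul_left _ (by omega)
    rw [← hk] at h3k
    omega
  have hzero : ∀ x : Fq r, H x = 0 := by
    intro x
    rcases eq_or_ne x 0 with rfl | hx
    · exact H0
    · have hmem : (Units.mk0 x hx) ∈ G := by rw [hGtop]; exact Subgroup.mem_top _
      have h2 := hG _ hmem 1 one_ne_zero
      rwa [one_mul, Units.val_mk0, H1] at h2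
  apply ha
  apply (traceForm_nondegenerate (ZMod 2) (Fq r)).1 a
  intro x
  have h2 := hzero x
  simpa [Algebra.traceForm_apply, hH, tr2] using h2
lemma key_exists (r n : ℕ) (hr : 1 ≤ r) (hn : 1 ≤ n) (hexc : ¬(n = 1 ∧ (2 : ℕ) ^ r = 4))
    (a : Fq r) (ha : a ≠ 0) :
    ∃ w ∈ DCfin r n, tr2 r (a * Matrix.trace w) ≠ 0 := by
  rcases eq_or_lt_of_le hn with hn1 | hn2
  · subst hn1
    rcases Nat.lt_or_ge r 3 with hr3 | hr3
    · interval_cases r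
      · -- r = 1
        have hall : ∀ x : Fq 1, x ≠ 0 → x = 1 := by
          have hcu : Nat.card (Fq 1)ˣ = 1 := by
            rw [Nat.card_units, GaloisField.card 2 1 one_ne_zero]
            norm_num
          have hsub : Subsingleton (Fq 1)ˣ :=
            (Nat.card_eq_one_iff_unique.mp hcu).1
          intro x hx
          have h2 := Subsingleton.elim (Units.mk0 x hx) 1
          calc x = ((Units.mk0 x hx : (Fq 1)ˣ) : Fq 1) := rfl
          _ = 1 := by rw [h2]; rfl
        obtain ⟨x, hx1⟩ := Algebra.trace_surjective (ZMod 2) (Fq 1) 1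
        have hx0 : x ≠ 0 := by
          rintro rfl
          rw [map_zero] at hx1
          exact one_ne_zero hx1.symm
        have htr1 : tr2 1 (1 : Fq 1) = 1 := by
          rw [← hall x hx0]
          exact hx1
        obtain ⟨w, hw, hwt⟩ := dc_elt_one 1 1 one_ne_zero
        refine ⟨w, hw, ?_⟩
        have e : (1 : Fq 1) + 1⁻¹ + 1 = 1 := by
          rw [inv_one, CharTwo.add_self_eq_zero, zero_add]
        rw [hwt, hall a ha, e, one_mul, htr1]
        exact one_ne_zero
      · -- r = 2 excluded
        exact absurd ⟨rfl, rfl⟩ hexc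
    · obtain ⟨t, ht, htr⟩ := kloos r hr3 a ha
      obtain ⟨w, hw, hwt⟩ := dc_elt_one r t ht
      exact ⟨w, hw, by rw [hwt]; exact htr⟩
  · have hx : ∃ x, tr2 r (a * x) ≠ 0 := by
      by_contra hc
      push_neg at hc
      exact ha ((traceForm_nondegenerate (ZMod 2) (Fq r)).1 a
        (fun x => by simpa [Algebra.traceForm_apply, tr2] using hc x))
    obtain ⟨x, hx⟩ := hx
    obtain ⟨w, hw, hwt⟩ := dc_elt_of r n hr hn2 x
    exact ⟨w, hw, by rw [hwt]; exact hx⟩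

lemma span_top (r : ℕ) (W : Submodule (ZMod 2) (Fq r))
    (h : ∀ a : Fq r, a ≠ 0 → ∃ x ∈ W, tr2 r (a * x) ≠ 0) : W = ⊤ := by
  by_contra hW
  have hlt : W < ⊤ := lt_top_iff_ne_top.mpr hW
  have hnt : Nontrivial (Fq r ⧸ W) := Submodule.Quotient.nontrivial_iff.mpr hlt.ne
  have hfr : 0 < Module.finrank (ZMod 2) (Fq r ⧸ W) := Module.finrank_pos
  let b := Module.finBasis (ZMod 2) (Fq r ⧸ W)
  let i0 : Fin (Module.finrank (ZMod 2) (Fq r ⧸ W)) := ⟨0, hfr⟩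
  let ℓ : Fq r →ₗ[ZMod 2] ZMod 2 := (b.coord i0) ∘ₗ W.mkQ
  have hℓ : ℓ ≠ 0 := by
    intro hc
    obtain ⟨u, hu⟩ := Submodule.Quotient.mk_surjective W (b i0)
    have h1 : ℓ u = 1 := by
      show b.coord i0 (W.mkQ u) = 1
      rw [show W.mkQ u = b i0 from hu]
      simp
    rw [hc] at h1
    simp at h1
  set a := ((Algebra.traceForm (ZMod 2) (Fq r)).toDual
    (traceForm_nondegenerate (ZMod 2) (Fq r))).symm ℓ with hadef
  have ha : a ≠ 0 := by
    intro hc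
    apply hℓ
    have := congrArg ((Algebra.traceForm (ZMod 2) (Fq r)).toDual
      (traceForm_nondegenerate (ZMod 2) (Fq r))) hc
    rwa [LinearEquiv.apply_symm_apply, map_zero] at this
  obtain ⟨x, hxW, hxne⟩ := h a ha
  apply hxne
  have h2 : Algebra.traceForm (ZMod 2) (Fq r) a x = ℓ x := by
    rw [hadef]
    rw [show (Algebra.traceForm (ZMod 2) (Fq r))
      (((Algebra.traceForm (ZMod 2) (Fq r)).toDual
        (traceForm_nondegenerate (ZMod 2) (Fq r))).symm ℓ) x
      = (((Algebra.traceForm (ZMod 2) (Fq r)).toDual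
        (traceForm_nondegenerate (ZMod 2) (Fq r)))
        (((Algebra.traceForm (ZMod 2) (Fq r)).toDual
          (traceForm_nondegenerate (ZMod 2) (Fq r))).symm ℓ)) x from rfl]
    rw [LinearEquiv.apply_symm_apply]
  have h3 : ℓ x = 0 := by
    show b.coord i0 (W.mkQ x) = 0
    rw [show W.mkQ x = 0 from (Submodule.Quotient.mk_eq_zero W).mpr hxW]
    simp
  show tr2 r (a * x) = 0
  rw [show tr2 r (a * x) = Algebra.traceForm (ZMod 2) (Fq r) a x from rfl, h2, h3]

/-- For `q = 2^r`, odd `n ≥ 1` with `(n, q) ≠ (1, 4)`: the `F_2`-linear map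
`a ↦ c(a) = (tr(a Tr g_1), …, tr(a Tr g_N))` is injective, and gives an
isomorphism from `F_q` onto the dual code `C(DC(n,q))^⊥ = {c(a) : a ∈ F_q}`. -/
theorem stmt_5 (r n : ℕ) (hr : 1 ≤ r) (hn : 1 ≤ n) (hodd : Odd n)
    (hexc : ¬(n = 1 ∧ (2 : ℕ) ^ r = 4))
    (g : Fin (DCfin r n).card → Matrix (Idx n) (Idx n) (Fq r))
    (hginj : Function.Injective g) (hgmem : ∀ i, g i ∈ DCfin r n) :
    Function.Injective (cword r n g) ∧
    {v : Fin (DCfin r n).card → ZMod 2 |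
        ∀ u ∈ codeSet r n g, ∑ i, u i * v i = 0} = Set.range (cword r n g) := by
  classical
  set vt : Fin (DCfin r n).card → Fq r := fun i => Matrix.trace (g i) with hvt
  have hgsurj : ∀ w ∈ DCfin r n, ∃ i, g i = w := by
    have himg : Finset.image g Finset.univ = DCfin r n := by
      apply Finset.eq_of_subset_of_card_le
      · intro w hw
        obtain ⟨i, _, rfl⟩ := Finset.mem_image.mp hw
        exact hgmem i
      · rw [Finset.card_image_of_injective _ hginj, Finset.card_univ, Fintype.card_fin]
    intro w hw
    rw [← himg] at hw
    obtain ⟨i, _, hi⟩ := Finset.mem_image.mp hw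
    exact ⟨i, hi⟩
  have key : ∀ a : Fq r, a ≠ 0 → ∃ i, tr2 r (a * vt i) ≠ 0 := by
    intro a ha
    obtain ⟨w, hw, hne⟩ := key_exists r n hr hn hexc a ha
    obtain ⟨i, rfl⟩ := hgsurj w hw
    exact ⟨i, hne⟩
  have hinj : Function.Injective (cword r n g) := by
    intro a b hab
    by_contra hne
    have hd : a + b ≠ 0 := by
      intro hc
      apply hne
      linear_combination hc - CharTwo.add_self_eq_zero b
    obtain ⟨i, hi⟩ := key (a + b) hd
    apply hi
    have h2 : tr2 r (a * vt i) + tr2 r (b * vt i) = tr2 r ((a + b) * vt i) := by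
      rw [add_mul]
      exact (map_add (Algebra.trace (ZMod 2) (Fq r)) _ _).symm
    rw [← h2]
    have h3 : tr2 r (a * vt i) = tr2 r (b * vt i) := congrFun hab i
    rw [h3]
    exact CharTwo.add_self_eq_zero _
  refine ⟨hinj, ?_⟩
  -- the linear map φ
  set φ : (Fin (DCfin r n).card → ZMod 2) →ₗ[ZMod 2] Fq r :=
    ∑ i, (LinearMap.proj i).smulRight (vt i) with hφ
  have hφapp : ∀ u, φ u = ∑ i, u i • vt i := by
    intro u
    rw [hφ]
    simp [LinearMap.sum_apply, LinearMap.smulRight_apply, LinearMap.proj_apply]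
  have hsm : ∀ u : Fin (DCfin r n).card → ZMod 2,
      (∑ i, algebraMap (ZMod 2) (Fq r) (u i) * Matrix.trace (g i)) = φ u := by
    intro u
    rw [hφapp]
    exact Finset.sum_congr rfl fun i _ => (Algebra.smul_def (u i) (vt i)).symm
  have hφsurj : LinearMap.range φ = ⊤ := by
    apply span_top
    intro a ha
    obtain ⟨i, hi⟩ := key a ha
    refine ⟨vt i, ⟨Pi.single i 1, ?_⟩, hi⟩
    rw [hφapp]
    rw [Finset.sum_eq_single i]
    · simp
    · intro b _ hb
      simp [Pi.single_eq_of_ne hb]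
    · intro hmem
      exact absurd (Finset.mem_univ i) hmem
  obtain ⟨sec, hsec⟩ := φ.exists_rightInverse_of_surjective hφsurj
  have hsec' : ∀ x, φ (sec x) = x := by
    intro x
    have := LinearMap.ext_iff.mp hsec x
    simpa using this
  set D := {v : Fin (DCfin r n).card → ZMod 2 |
      ∀ u ∈ codeSet r n g, ∑ i, u i * v i = 0} with hD
  have hsub : Set.range (cword r n g) ⊆ D := by
    rintro _ ⟨a, rfl⟩ u hu
    have hu0 : (∑ i, algebraMap (ZMod 2) (Fq r) (u i) * Matrix.trace (g i)) = 0 := hu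
    have e1 : ∀ i, u i * cword r n g a i = tr2 r (u i • (a * vt i)) := by
      intro i
      calc u i * cword r n g a i = u i • tr2 r (a * Matrix.trace (g i)) := rfl
      _ = tr2 r (u i • (a * Matrix.trace (g i))) :=
        (_root_.map_smul (Algebra.trace (ZMod 2) (Fq r)) (u i) _).symm
    calc ∑ i, u i * cword r n g a i
        = ∑ i, tr2 r (u i • (a * vt i)) := Finset.sum_congr rfl fun i _ => e1 i
      _ = tr2 r (∑ i, u i • (a * vt i)) :=
        (map_sum (Algebra.trace (ZMod 2) (Fq r)) _ _).symm
      _ = tr2 r (a * ∑ i, algebraMap (ZMod 2) (Fq r) (u i) * vt i) := by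
          congr 1
          rw [Finset.mul_sum]
          apply Finset.sum_congr rfl
          intro i _
          rw [Algebra.smul_def]
          ring
      _ = 0 := by rw [hu0, mul_zero]; exact map_zero (Algebra.trace (ZMod 2) (Fq r))
  -- the dot-product functionals
  set lw : (Fin (DCfin r n).card → ZMod 2) →
      ((Fin (DCfin r n).card → ZMod 2) →ₗ[ZMod 2] ZMod 2) :=
    fun w => ∑ i, (LinearMap.proj i).smulRight (w i) with hlw
  have hlwapp : ∀ w u, lw w u = ∑ i, u i * w i := by
    intro w u
    rw [hlw]
    simp [LinearMap.sum_apply, LinearMap.smulRight_apply, LinearMap.proj_apply, smul_eq_mul]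
  have hcardle : Nat.card ↥D ≤ Nat.card (Fq r) := by
    have hvan : ∀ (w0 : ↥D) u, φ u = 0 → lw w0.1 u = 0 := by
      intro w0 u hu
      rw [hlwapp]
      refine w0.2 u ?_
      show (∑ i, algebraMap (ZMod 2) (Fq r) (u i) * Matrix.trace (g i)) = 0
      rw [hsm u]
      exact hu
    have hfact : ∀ (w0 : ↥D) u, lw w0.1 u = ((lw w0.1) ∘ₗ sec) (φ u) := by
      intro w0 u
      have hker : φ (u - sec (φ u)) = 0 := by
        rw [map_sub, hsec' (φ u), sub_self]
      have h0 := hvan w0 _ hker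
      rw [map_sub] at h0
      have h1 : lw w0.1 u = lw w0.1 (sec (φ u)) := sub_eq_zero.mp h0
      rw [h1]
      rfl
    have hΨinj : Function.Injective (fun w0 : ↥D => (lw w0.1) ∘ₗ sec) := by
      intro w w' hww
      apply Subtype.ext
      funext i
      have hww' : (lw w.1) ∘ₗ sec = (lw w'.1) ∘ₗ sec := hww
      have h1 : lw w.1 (Pi.single i 1) = lw w'.1 (Pi.single i 1) := by
        rw [hfact w, hfact w', hww']
      rw [hlwapp, hlwapp] at h1
      have hsingle : ∀ v0 : Fin (DCfin r n).card → ZMod 2,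
          (∑ j, (Pi.single i 1 : Fin (DCfin r n).card → ZMod 2) j * v0 j) = v0 i := by
        intro v0
        rw [Finset.sum_eq_single i]
        · simp
        · intro b _ hb
          simp [Pi.single_eq_of_ne hb]
        · intro hmem
          exact absurd (Finset.mem_univ i) hmem
      rw [hsingle, hsingle] at h1
      exact h1
    let bb := Module.finBasis (ZMod 2) (Fq r)
    have e := (bb.constr (ZMod 2) :
      (Fin (Module.finrank (ZMod 2) (Fq r)) → ZMod 2) ≃ₗ[ZMod 2] (Fq r →ₗ[ZMod 2] ZMod 2))
    haveI : Finite (Fq r →ₗ[ZMod 2] ZMod 2) := Finite.of_equiv _ e.toEquiv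
    have h1 : Nat.card ↥D ≤ Nat.card (Fq r →ₗ[ZMod 2] ZMod 2) :=
      Nat.card_le_card_of_injective _ hΨinj
    have h2 : Nat.card (Fq r →ₗ[ZMod 2] ZMod 2) = Nat.card (Fq r) := by
      rw [← Nat.card_congr e.toEquiv]
      rw [Nat.card_eq_fintype_card, Nat.card_eq_fintype_card, Fintype.card_fun,
        Module.card_fintype bb, ZMod.card, Fintype.card_fin]
    rw [h2] at h1
    exact h1
  have hcardrange : Nat.card ↥(Set.range (cword r n g)) = Nat.card (Fq r) :=
    Nat.card_range_of_injective hinj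
  refine (Set.eq_of_subset_of_ncard_le hsub ?_ (Set.toFinite _)).symm
  rw [← Nat.card_coe_set_eq, ← Nat.card_coe_set_eq, hcardrange]
  exact hcardle
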